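/- For every integer L ≥ 1, every integer i ≥ 0 and every t ∈ [0, 1/(2L²)], the i-th iterated derivative of g_L satisfies |g_L^{(i)}(t)| ≤ (3·i·L^{3/2})^i, where the right-hand side is interpreted as 1 when i = 0. -/

import Mathlib

/-- The polynomial function `g_L(t) = ∏_{c=1}^{L} (1 - c² t²)^⌊L/c⌋`. -/
noncomputable def gL (L : ℕ) (t : ℝ) : ℝ :=
  ∏ c ∈ Finset.Icc 1 L, (1 - (c : ℝ) ^ 2 * t ^ 2) ^ (L / c)

section MyAux
open Polynomial Finset Real Nat

lemma myKey (s r : ℝ) (hs : 0 ≤ s) (hr : 0 ≤ r) : ∀ k : ℕ, s^(k+1) + (k+1)*r*s^k ≤ (s+r)^(k+1) := by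
  intro k
  induction k with
  | zero => simp
  | succ k ih =>
    have h1 : (0:ℝ) ≤ s ^ k := pow_nonneg hs k
    have hkr : (0:ℝ) ≤ ((k:ℝ)+1)*r^2*s^k := by positivity
    have hthis : (s+r)^(k+1+1) = (s+r) * (s+r)^(k+1) := by ring
    rw [hthis]
    have h3 : (s+r) * (s^(k+1) + ((k:ℝ)+1)*r*s^k) ≤ (s+r) * (s+r)^(k+1) :=
      mul_le_mul_of_nonneg_left (by push_cast at ih ⊢; linarith) (by linarith)
    have h4 : (s+r)*(s^(k+1)+((k:ℝ)+1)*r*s^k)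
        = s^(k+1+1) + (((k:ℝ)+1)+1)*r*s^(k+1) + ((k:ℝ)+1)*r^2*s^k := by ring
    push_cast
    linarith [h4 ▸ h3]

lemma myStep (r S : ℝ) (hr : 0 ≤ r) (hS : 0 ≤ S) (P : ℝ[X])
    (h0 : ∀ k, |P.coeff (2*k)| ≤ S^k / k !) (h1 : ∀ k, P.coeff (2*k+1) = 0) :
    (∀ k, |((1 - C r * X^2) * P).coeff (2*k)| ≤ (S+r)^k / k !) ∧
    (∀ k, ((1 - C r * X^2) * P).coeff (2*k+1) = 0) := by
  have hc : ∀ n, ((1 - C r * X^2) * P).coeff n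
      = P.coeff n - r * (if 2 ≤ n then P.coeff (n-2) else 0) := by
    intro n
    have he : (1 - C r * X^2) * P = P - C r * (P * X^2) := by ring
    rw [he, coeff_sub, coeff_C_mul, coeff_mul_X_pow']
  constructor
  · intro k
    rw [hc]
    match k with
    | 0 => simpa using h0 0
    | (k+1) =>
      have h2 : 2 ≤ 2*(k+1) := by omega
      rw [if_pos h2]
      have h3 : 2*(k+1) - 2 = 2*k := by omega
      rw [h3]
      have hfac : ((k+1)! : ℝ) = ((k:ℝ)+1) * k ! := by
        rw [Nat.factorial_succ]; push_cast; ring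
      have hfp : (0:ℝ) < k ! := by positivity
      calc |P.coeff (2*(k+1)) - r * P.coeff (2*k)|
          ≤ |P.coeff (2*(k+1))| + |r * P.coeff (2*k)| := abs_sub _ _
        _ = |P.coeff (2*(k+1))| + r * |P.coeff (2*k)| := by
            rw [abs_mul, abs_of_nonneg hr]
        _ ≤ S^(k+1) / (k+1)! + r * (S^k / k !) := by
            gcongr
            · exact h0 (k+1)
            · exact h0 k
        _ = (S^(k+1) + ((k:ℝ)+1)*r*S^k) / (k+1)! := by
            rw [hfac]; field_simp
        _ ≤ (S+r)^(k+1) / (k+1)! := by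
            apply div_le_div_of_nonneg_right ?_ (by positivity)
            have := myKey S r hS hr k; push_cast at this ⊢; linarith
  · intro k
    rw [hc]
    match k with
    | 0 => simpa using h1 0
    | (k+1) =>
      have h2 : 2 ≤ 2*(k+1)+1 := by omega
      rw [if_pos h2]
      have h3 : 2*(k+1)+1 - 2 = 2*k+1 := by omega
      rw [h3, h1 (k+1), h1 k]
      ring

lemma myPowStep (r S : ℝ) (hr : 0 ≤ r) (hS : 0 ≤ S) (P : ℝ[X])
    (h0 : ∀ k, |P.coeff (2*k)| ≤ S^k / k !) (h1 : ∀ k, P.coeff (2*k+1) = 0) (e : ℕ) :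
    (∀ k, |((1 - C r * X^2)^e * P).coeff (2*k)| ≤ (S + e*r)^k / k !) ∧
    (∀ k, ((1 - C r * X^2)^e * P).coeff (2*k+1) = 0) := by
  induction e with
  | zero => simpa using ⟨h0, h1⟩
  | succ e ih =>
    have he : (1 - C r * X^2)^(e+1) * P = (1 - C r * X^2) * ((1 - C r * X^2)^e * P) := by ring
    have hS' : 0 ≤ S + e*r := by positivity
    have := myStep r (S + e*r) hr hS' _ ih.1 ih.2
    rw [he]
    constructor
    · intro k
      have h := this.1 k
      have : S + (e:ℝ)*r + r = S + ((e:ℕ)+1:ℝ)*r := by ring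
      rw [this] at h
      push_cast at h ⊢
      exact h
    · exact this.2

lemma myProd (E : ℕ → ℕ) (s : Finset ℕ) :
    (∀ k, |(∏ c ∈ s, (1 - C ((c:ℝ)^2) * X^2)^(E c)).coeff (2*k)|
        ≤ (∑ c ∈ s, (E c : ℝ) * (c:ℝ)^2)^k / k !) ∧
    (∀ k, (∏ c ∈ s, (1 - C ((c:ℝ)^2) * X^2)^(E c)).coeff (2*k+1) = 0) := by
  classical
  induction s using Finset.induction_on with
  | empty =>
    constructor
    · intro k
      simp only [Finset.prod_empty, Finset.sum_empty]
      match k with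
      | 0 => simp
      | (k+1) => simp [coeff_one]
    · intro k; simp [coeff_one]
  | insert a t ha ih =>
    rw [Finset.prod_insert ha, Finset.sum_insert ha]
    have hS : 0 ≤ ∑ c ∈ t, (E c : ℝ) * (c:ℝ)^2 := by positivity
    have := myPowStep ((a:ℝ)^2) _ (by positivity) hS _ ih.1 ih.2 (E a)
    constructor
    · intro k
      have h := this.1 k
      have heq : (∑ c ∈ t, (E c : ℝ) * (c:ℝ)^2) + (E a : ℝ) * (a:ℝ)^2
          = (E a : ℝ) * (a:ℝ)^2 + ∑ c ∈ t, (E c : ℝ) * (c:ℝ)^2 := by ring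
      rw [heq] at h
      exact h
    · exact this.2

lemma myExp43 : Real.exp (4/3) ≤ 4 := by
  have h1 : Real.exp (4/3) ^ 3 = Real.exp 4 := by
    rw [← Real.exp_nat_mul]; norm_num
  have h2 : Real.exp 4 < 64 := by
    have h3 : Real.exp 4 = Real.exp 1 ^ 4 := by rw [← Real.exp_nat_mul]; norm_num
    have h4 := Real.exp_one_lt_d9
    have h5 : (0:ℝ) < Real.exp 1 := Real.exp_pos 1
    rw [h3]
    have h6 : Real.exp 1 ^ 4 < 2.7182818286 ^ 4 := by
      apply pow_lt_pow_left₀ h4 h5.le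
      norm_num
    nlinarith [h6]
  nlinarith [Real.exp_pos (4/3), sq_nonneg (Real.exp (4/3) - 4), sq_nonneg (Real.exp (4/3) + 4)]

lemma myTermBound (L i n k : ℕ) (hL : 1 ≤ L) (hi : 1 ≤ i) (hn : n + i = 2*k) :
    ((2:ℝ)*k)^i * (((L:ℝ)^3)^k / k !) * (1/(2*(L:ℝ)^2))^n ≤
    (3 * i * (L:ℝ)^((3:ℝ)/2))^i * (Real.exp (-(i:ℝ)) * ((Real.exp (4/3)/4)^k / k !)) := by
  have hL1 : (1:ℝ) ≤ (L:ℝ) := by exact_mod_cast hL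
  have hL0 : (0:ℝ) < (L:ℝ) := by linarith
  have hi0 : (0:ℝ) < (i:ℝ) := by exact_mod_cast hi
  have hnR : (n:ℝ) + (i:ℝ) = 2*(k:ℝ) := by exact_mod_cast hn
  -- Part A : (2k)^i ≤ (3/2 i)^i * (exp(4/3)^k * exp(-i))
  set u : ℝ := 4*(k:ℝ)/(3*(i:ℝ)) with hu_def
  have hu0 : 0 ≤ u := by positivity
  have h2k : (2:ℝ)*(k:ℝ) = (3/2*(i:ℝ)) * u := by
    rw [hu_def]; field_simp; ring
  have hu1 : u ≤ Real.exp (u - 1) := by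
    have := Real.add_one_le_exp (u-1); linarith
  have hA : ((2:ℝ)*k)^i ≤ (3/2*(i:ℝ))^i * (Real.exp (4/3)^k * Real.exp (-(i:ℝ))) := by
    calc ((2:ℝ)*k)^i = (3/2*(i:ℝ))^i * u^i := by rw [h2k, mul_pow]
      _ ≤ (3/2*(i:ℝ))^i * (Real.exp (u-1))^i := by
          gcongr
      _ = (3/2*(i:ℝ))^i * Real.exp ((i:ℝ)*(u-1)) := by rw [← Real.exp_nat_mul]
      _ = (3/2*(i:ℝ))^i * (Real.exp (4/3)^k * Real.exp (-(i:ℝ))) := by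
          congr 1
          have : (i:ℝ)*(u-1) = (k:ℝ)*(4/3) + (-(i:ℝ)) := by
            rw [hu_def]; field_simp; ring
          rw [this, Real.exp_add, Real.exp_nat_mul]
  -- Part B : (L³)^k * (1/(2L²))^n ≤ 2^i * (L^{3/2})^i * (1/4)^k
  have hb1 : ((L:ℝ)^3)^k * (1/(2*(L:ℝ)^2))^n = (1/2:ℝ)^n * (L:ℝ)^(3*(k:ℝ) - 2*(n:ℝ)) := by
    rw [Real.rpow_sub hL0]
    rw [show (3*(k:ℝ)) = ((3*k:ℕ):ℝ) by push_cast; ring,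
        show (2*(n:ℝ)) = ((2*n:ℕ):ℝ) by push_cast; ring,
        Real.rpow_natCast, Real.rpow_natCast, pow_mul, pow_mul]
    have hLne : (L:ℝ) ≠ 0 := ne_of_gt hL0
    field_simp
    ring_nf; rw [← mul_pow, mul_inv_cancel₀ hLne, one_pow, one_mul]
  have hb2 : (L:ℝ)^(3*(k:ℝ)-2*(n:ℝ)) ≤ (L:ℝ)^((3:ℝ)/2 * (i:ℝ)) := by
    apply Real.rpow_le_rpow_of_exponent_le hL1
    linarith
  have hb3 : ((L:ℝ)^((3:ℝ)/2))^i = (L:ℝ)^((3:ℝ)/2 * (i:ℝ)) := by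
    rw [← Real.rpow_natCast ((L:ℝ)^((3:ℝ)/2)) i, ← Real.rpow_mul hL0.le]
  have hb4 : (1/2:ℝ)^n = 2^i * (1/4:ℝ)^k := by
    have hik : i ≤ 2*k := by omega
    have hn' : n = 2*k - i := by omega
    rw [hn', pow_sub₀ _ (by norm_num) hik, pow_mul, div_eq_mul_inv, ← inv_pow]
    norm_num
    ring
  have hB : ((L:ℝ)^3)^k * (1/(2*(L:ℝ)^2))^n ≤ (2:ℝ)^i * ((L:ℝ)^((3:ℝ)/2))^i * (1/4:ℝ)^k := by
    rw [hb1, hb4, hb3]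
    calc (2:ℝ)^i * (1/4:ℝ)^k * (L:ℝ)^(3*(k:ℝ)-2*(n:ℝ))
        ≤ (2:ℝ)^i * (1/4:ℝ)^k * (L:ℝ)^((3:ℝ)/2*(i:ℝ)) := by
          gcongr
      _ = (2:ℝ)^i * (L:ℝ)^((3:ℝ)/2*(i:ℝ)) * (1/4:ℝ)^k := by ring
  -- assemble
  have hkf : (0:ℝ) < k ! := by positivity
  calc ((2:ℝ)*k)^i * (((L:ℝ)^3)^k / k !) * (1/(2*(L:ℝ)^2))^n
      = ((2:ℝ)*k)^i * ((((L:ℝ)^3)^k * (1/(2*(L:ℝ)^2))^n) / k !) := by ring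
    _ ≤ ((3/2*(i:ℝ))^i * (Real.exp (4/3)^k * Real.exp (-(i:ℝ)))) *
        (((2:ℝ)^i * ((L:ℝ)^((3:ℝ)/2))^i * (1/4:ℝ)^k) / k !) := by
        apply mul_le_mul hA _ (by positivity) (by positivity)
        apply div_le_div_of_nonneg_right hB hkf.le
    _ = (3 * i * (L:ℝ)^((3:ℝ)/2))^i * (Real.exp (-(i:ℝ)) * ((Real.exp (4/3)/4)^k / k !)) := by
        have h32 : (3/2:ℝ)^i * 2^i = 3^i := by rw [← mul_pow]; norm_num
        rw [div_pow]
        rw [show ((3:ℝ) * i * (L:ℝ)^((3:ℝ)/2))^i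
            = (3:ℝ)^i * (i:ℝ)^i * ((L:ℝ)^((3:ℝ)/2))^i by rw [mul_pow, mul_pow], ← h32]
        ring_nf; rw [show (1/4:ℝ) = 4⁻¹ by norm_num]
        ring

lemma myIterEval (p : ℝ[X]) (i : ℕ) :
    iteratedDeriv i (fun x => p.eval x) = fun x => (Polynomial.derivative^[i] p).eval x := by
  induction i with
  | zero => simp [iteratedDeriv_zero]
  | succ n ih =>
    rw [iteratedDeriv_succ, ih]
    funext x
    rw [Function.iterate_succ_apply']
    exact Polynomial.deriv (p := Polynomial.derivative^[n] p)

lemma mySle (L : ℕ) (hL : 1 ≤ L) :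
    ∑ c ∈ Finset.Icc 1 L, ((L/c : ℕ):ℝ) * (c:ℝ)^2 ≤ (L:ℝ)^3 := by
  have hL1 : (1:ℝ) ≤ (L:ℝ) := by exact_mod_cast hL
  calc ∑ c ∈ Finset.Icc 1 L, ((L/c : ℕ):ℝ) * (c:ℝ)^2
      ≤ ∑ c ∈ Finset.Icc 1 L, (L:ℝ)*(L:ℝ) := by
        apply Finset.sum_le_sum
        intro c hc
        obtain ⟨hc1, hcL⟩ := Finset.mem_Icc.mp hc
        have d1 : ((L/c)*c : ℕ) ≤ L := Nat.div_mul_le_self L c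
        have d1R : (((L/c)*c : ℕ):ℝ) ≤ (L:ℝ) := by exact_mod_cast d1
        have hcLR : (c:ℝ) ≤ (L:ℝ) := by exact_mod_cast hcL
        calc ((L/c : ℕ):ℝ) * (c:ℝ)^2 = (((L/c)*c : ℕ):ℝ) * (c:ℝ) := by push_cast; ring
          _ ≤ (L:ℝ) * (L:ℝ) := by
              apply mul_le_mul d1R hcLR (by positivity) (by positivity)
    _ = (L:ℝ)^3 := by
        rw [Finset.sum_const, Nat.card_Icc]
        simp
        ring

end MyAux

open Polynomial Finset Real Nat in
set_option maxHeartbeats 1000000 in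
/-- For every `L ≥ 1`, `i ≥ 0` and `t ∈ [0, 1/(2L²)]`,
`|g_L^{(i)}(t)| ≤ (3 i L^{3/2})^i`. -/
theorem stmt6 (L : ℕ) (hL : 1 ≤ L) (i : ℕ) :
    ∀ t ∈ Set.Icc (0 : ℝ) (1 / (2 * (L : ℝ) ^ 2)),
      |iteratedDeriv i (gL L) t| ≤ (3 * (i : ℝ) * (L : ℝ) ^ ((3 : ℝ) / 2)) ^ i := by
  intro t ht
  obtain ⟨ht0, ht1⟩ := ht
  have hL1 : (1:ℝ) ≤ (L:ℝ) := by exact_mod_cast hL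
  rcases Nat.eq_zero_or_pos i with hi0 | hi
  · -- case i = 0
    subst hi0
    rw [pow_zero, iteratedDeriv_zero]
    have ht1' : t * (2*(L:ℝ)^2) ≤ 1 := (le_div_iff₀ (by positivity)).mp ht1
    rw [gL, Finset.abs_prod]
    apply Finset.prod_le_one (fun c _ => abs_nonneg _)
    intro c hc
    obtain ⟨hc1, hcL⟩ := Finset.mem_Icc.mp hc
    have hcLR : (c:ℝ) ≤ (L:ℝ) := by exact_mod_cast hcL
    have hc0 : (0:ℝ) ≤ (c:ℝ) := by positivity
    rw [abs_pow]
    apply pow_le_one₀ (abs_nonneg _)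
    rw [abs_le]
    constructor
    · nlinarith [sq_nonneg ((L:ℝ)*t), mul_le_mul ht1' ht1' (by positivity : (0:ℝ) ≤ t * (2*(L:ℝ)^2)) (by norm_num : (0:ℝ) ≤ 1), mul_le_mul hcLR hcLR hc0 (by positivity : (0:ℝ) ≤ (L:ℝ)), sq_nonneg t]
    · nlinarith [sq_nonneg ((c:ℝ)*t)]
  · -- case i ≥ 1
    set Q : ℝ[X] := ∏ c ∈ Finset.Icc 1 L, (1 - C ((c:ℝ)^2) * X^2)^(L/c) with hQdef
    have hg : gL L = fun x => Q.eval x := by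
      funext x
      simp [gL, hQdef, eval_prod]
    have hiter : iteratedDeriv i (gL L) t = (Polynomial.derivative^[i] Q).eval t := by
      rw [hg, myIterEval]
    have hQgood := myProd (fun c => L / c) (Finset.Icc 1 L)
    have hodd : ∀ k, Q.coeff (2*k+1) = 0 := hQgood.2
    have hcoeff : ∀ k, |Q.coeff (2*k)| ≤ ((L:ℝ)^3)^k / k ! := by
      intro k
      refine le_trans (hQgood.1 k) ?_
      apply div_le_div_of_nonneg_right _ (by positivity : (0:ℝ) < (k ! : ℝ)).le
      exact pow_le_pow_left₀ (by positivity) (mySle L hL) k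
    set N := Q.natDegree + 1 with hN
    have hdeg : (Polynomial.derivative^[i] Q).natDegree < N :=
      lt_of_le_of_lt (le_trans (natDegree_iterate_derivative Q i) (Nat.sub_le _ _)) (Nat.lt_succ_self _)
    have heval : (Polynomial.derivative^[i] Q).eval t
        = ∑ n ∈ range N, (Polynomial.derivative^[i] Q).coeff n * t^n :=
      eval_eq_sum_range' hdeg t
    set y : ℝ := Real.exp (4/3) / 4 with hy
    have hy0 : 0 ≤ y := by positivity
    have hy1 : y ≤ 1 := by
      rw [hy]; linarith [myExp43]
    set Cc : ℝ := (3*(i:ℝ)*(L:ℝ)^((3:ℝ)/2))^i * Real.exp (-(i:ℝ)) with hCc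
    have hCc0 : 0 ≤ Cc := by positivity
    set f : ℕ → ℝ := fun n => if Even (n + i) then y^((n+i)/2) / ((n+i)/2)! else 0 with hf
    have hterm : ∀ n, |(Polynomial.derivative^[i] Q).coeff n| * t^n ≤ Cc * f n := by
      intro n
      rw [coeff_iterate_derivative, nsmul_eq_mul, abs_mul, Nat.abs_cast]
      by_cases he : Even (n + i)
      · obtain ⟨k, hk⟩ := he
        have hk2 : n + i = 2*k := by omega
        have hdiv : (n+i)/2 = k := by omega
        have hfn : f n = y^k / k ! := by
          rw [hf]; simp only [if_pos (hk2 ▸ (even_two_mul k : Even (2*k)) : Even (n+i)), hdiv]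
        rw [hfn]
        calc ((n+i).descFactorial i : ℝ) * |Q.coeff (n+i)| * t^n
            ≤ ((2:ℝ)*k)^i * (((L:ℝ)^3)^k / k !) * (1/(2*(L:ℝ)^2))^n := by
              have hd : ((n+i).descFactorial i : ℝ) ≤ ((2:ℝ)*k)^i := by
                have h' := Nat.descFactorial_le_pow (n+i) i
                calc ((n+i).descFactorial i : ℝ) ≤ ((n+i:ℕ):ℝ)^i := by exact_mod_cast h'
                  _ = ((2:ℝ)*k)^i := by rw [hk2]; push_cast; ring
              have hco := hcoeff k
              rw [← hk2] at hco
              have htn : t^n ≤ (1/(2*(L:ℝ)^2))^n := pow_le_pow_left₀ ht0 ht1 n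
              apply mul_le_mul (mul_le_mul hd hco (abs_nonneg _) (by positivity)) htn
                (pow_nonneg ht0 n) (by positivity)
          _ ≤ Cc * (y^k / k !) := by
              have h' := myTermBound L i n k hL hi hk2
              calc ((2:ℝ)*k)^i * (((L:ℝ)^3)^k / k !) * (1/(2*(L:ℝ)^2))^n
                  ≤ (3 * i * (L:ℝ)^((3:ℝ)/2))^i * (Real.exp (-(i:ℝ)) * ((Real.exp (4/3)/4)^k / k !)) := h'
                _ = Cc * (y^k / k !) := by rw [hCc, hy]; ring
      · obtain ⟨k, hk⟩ := Nat.not_even_iff_odd.mp he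
        have hfn : f n = 0 := by rw [hf]; simp only [if_neg he]
        rw [hfn, hk, hodd k]
        simp
    have hsumf : ∑ n ∈ range N, f n ≤ Real.exp y := by
      have hstep : ∑ n ∈ range N, f n
          = ∑ n ∈ (range N).filter (fun n => Even (n + i)), y^((n+i)/2) / ((n+i)/2)! := by
        rw [Finset.sum_filter]
      rw [hstep]
      set A := (range N).filter (fun n => Even (n + i)) with hA
      have hinj : ∀ x ∈ A, ∀ z ∈ A, (x+i)/2 = (z+i)/2 → x = z := by
        intro x hx z hz hxz
        have hex : Even (x + i) := (Finset.mem_filter.mp hx).2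
        have hez : Even (z + i) := (Finset.mem_filter.mp hz).2
        obtain ⟨a, ha⟩ := hex
        obtain ⟨b, hb⟩ := hez
        omega
      calc ∑ n ∈ A, y^((n+i)/2) / ((n+i)/2)!
          = ∑ m ∈ A.image (fun n => (n+i)/2), y^m / m ! := (Finset.sum_image (f := fun m => y^m / m !) hinj).symm
        _ ≤ ∑ m ∈ range (N+i), y^m / m ! := by
            apply Finset.sum_le_sum_of_subset_of_nonneg
            · intro m hm
              obtain ⟨n, hn, hnm⟩ := Finset.mem_image.mp hm
              have hnN : n < N := Finset.mem_range.mp (Finset.mem_filter.mp hn).1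
              apply Finset.mem_range.mpr
              omega
            · intro m _ _
              positivity
        _ ≤ Real.exp y := Real.sum_le_exp_of_nonneg hy0 _
    have hfin : |iteratedDeriv i (gL L) t| ≤ Cc * Real.exp y := by
      rw [hiter, heval]
      calc |∑ n ∈ range N, (Polynomial.derivative^[i] Q).coeff n * t^n|
          ≤ ∑ n ∈ range N, |(Polynomial.derivative^[i] Q).coeff n * t^n| :=
            Finset.abs_sum_le_sum_abs _ _
        _ ≤ ∑ n ∈ range N, Cc * f n := by
            apply Finset.sum_le_sum
            intro n _
            rw [abs_mul, abs_pow, abs_of_nonneg ht0]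
            exact hterm n
        _ = Cc * ∑ n ∈ range N, f n := by rw [Finset.mul_sum]
        _ ≤ Cc * Real.exp y := by
            apply mul_le_mul_of_nonneg_left hsumf hCc0
    refine le_trans hfin ?_
    rw [hCc]
    calc (3*(i:ℝ)*(L:ℝ)^((3:ℝ)/2))^i * Real.exp (-(i:ℝ)) * Real.exp y
        = (3*(i:ℝ)*(L:ℝ)^((3:ℝ)/2))^i * Real.exp (y - i) := by
          rw [mul_assoc, ← Real.exp_add]; ring_nf
      _ ≤ (3*(i:ℝ)*(L:ℝ)^((3:ℝ)/2))^i * 1 := by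
          apply mul_le_mul_of_nonneg_left _ (by positivity)
          apply Real.exp_le_one_iff.mpr
          have hiR : (1:ℝ) ≤ (i:ℝ) := by exact_mod_cast hi
          linarith
      _ = (3*(i:ℝ)*(L:ℝ)^((3:ℝ)/2))^i := by rw [mul_one]
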